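/- Define P_1(z) = z if |z| ≥ 1/2 and P_1(z) = 1 otherwise, and recursively P_{ν}(z) = ∏_{0 ≤ j ≤ ν-1, |z+j| ≥ 1/2} (z+j) over those indices j with |z+j| ≥ 1/2. Then for every z ∈ ℂ and every integer ν ≥ 1, |P_ν(z)| ≥ 2^{-ν} (ν-1)!. -/

import Mathlib

open Finset

/-- `P ν z` is the product of the factors `z + j` over `0 ≤ j ≤ ν - 1`
restricted to those `j` with `|z + j| ≥ 1/2` (empty product = 1). -/
noncomputable def Ppartial (ν : ℕ) (z : ℂ) : ℂ :=
  ∏ j ∈ Finset.range ν, if (1 : ℝ) / 2 ≤ ‖z + j‖ then z + j else 1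

lemma Qlem (n : ℕ) : ∀ x : ℝ,
    (Nat.factorial n : ℝ) / 2 ^ (n + 1) ≤ ∏ j ∈ range (n + 1), max (1/2) |x + (j : ℝ)| := by
  induction n with
  | zero =>
    intro x
    have h : (Nat.factorial 0 : ℝ) / 2 ^ (0 + 1) = 1 / 2 := by norm_num
    rw [h, Finset.prod_range_one]
    exact le_max_left _ _
  | succ n ih =>
    intro x
    have hnonneg : ∀ j ∈ range (n + 1), (0:ℝ) ≤ max (1/2) |x + (j:ℝ)| := by
      intro j _; positivity
    by_cases hx : -((n:ℝ) + 1) / 2 ≤ x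
    · -- remove the last factor j = n+1
      rw [Finset.prod_range_succ]
      have h1 : ((n:ℝ) + 1) / 2 ≤ max (1/2) |x + ((n + 1 : ℕ) : ℝ)| := by
        have : ((n:ℝ) + 1) / 2 ≤ x + ((n + 1 : ℕ) : ℝ) := by
          push_cast; linarith
        calc ((n:ℝ) + 1) / 2 ≤ x + ((n + 1 : ℕ) : ℝ) := this
          _ ≤ |x + ((n + 1 : ℕ) : ℝ)| := le_abs_self _
          _ ≤ _ := le_max_right _ _
      have h2 := ih x
      have hprodnn : (0:ℝ) ≤ ∏ j ∈ range (n + 1), max (1/2) |x + (j:ℝ)| :=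
        Finset.prod_nonneg hnonneg
      calc (Nat.factorial (n+1) : ℝ) / 2 ^ (n + 1 + 1)
          = ((Nat.factorial n : ℝ) / 2 ^ (n + 1)) * (((n:ℝ) + 1) / 2) := by
            rw [Nat.factorial_succ]; push_cast; ring
        _ ≤ (∏ j ∈ range (n + 1), max (1/2) |x + (j:ℝ)|) * (((n:ℝ)+1)/2) := by
            apply mul_le_mul_of_nonneg_right h2; positivity
        _ ≤ (∏ j ∈ range (n + 1), max (1/2) |x + (j:ℝ)|) *
              max (1/2) |x + ((n + 1 : ℕ) : ℝ)| := by
            apply mul_le_mul_of_nonneg_left h1 hprodnn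
    · -- remove the first factor j = 0, shift x by 1
      push_neg at hx
      rw [Finset.prod_range_succ']
      have h1 : ((n:ℝ) + 1) / 2 ≤ max (1/2) |x + ((0:ℕ) : ℝ)| := by
        have : ((n:ℝ) + 1) / 2 ≤ |x| := by
          have h1 : ((n:ℝ) + 1) / 2 ≤ -x := by linarith
          exact h1.trans (neg_le_abs x)
        simpa using this.trans (le_max_right _ _)
      have h2 := ih (x + 1)
      have heq : ∏ j ∈ range (n + 1), max (1/2) |x + ((j + 1 : ℕ) : ℝ)| =
          ∏ j ∈ range (n + 1), max (1/2) |(x + 1) + (j:ℝ)| := by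
        apply Finset.prod_congr rfl
        intro j _
        congr 1
        push_cast
        ring_nf
      rw [heq]
      have hprodnn : (0:ℝ) ≤ ∏ j ∈ range (n + 1), max (1/2) |(x+1) + (j:ℝ)| := by
        apply Finset.prod_nonneg; intro j _; positivity
      calc (Nat.factorial (n+1) : ℝ) / 2 ^ (n + 1 + 1)
          = ((Nat.factorial n : ℝ) / 2 ^ (n + 1)) * (((n:ℝ) + 1) / 2) := by
            rw [Nat.factorial_succ]; push_cast; ring
        _ ≤ (∏ j ∈ range (n + 1), max (1/2) |(x+1) + (j:ℝ)|) * (((n:ℝ)+1)/2) := by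
            apply mul_le_mul_of_nonneg_right h2; positivity
        _ ≤ (∏ j ∈ range (n + 1), max (1/2) |(x+1) + (j:ℝ)|) *
              max (1/2) |x + ((0:ℕ) : ℝ)| := by
            apply mul_le_mul_of_nonneg_left h1 hprodnn

theorem abs_Ppartial_ge (z : ℂ) (ν : ℕ) (hν : 1 ≤ ν) :
    ((Nat.factorial (ν - 1) : ℝ)) / 2 ^ ν ≤ ‖Ppartial ν z‖ := by
  obtain ⟨n, rfl⟩ : ∃ n, ν = n + 1 := ⟨ν - 1, (Nat.succ_pred_eq_of_pos hν).symm⟩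
  have hfac : (n + 1) - 1 = n := rfl
  rw [hfac, Ppartial, norm_prod]
  refine le_trans (Qlem n z.re) (Finset.prod_le_prod ?_ ?_)
  · intro j _; positivity
  · intro j _
    by_cases h : (1:ℝ)/2 ≤ ‖z + j‖
    · rw [if_pos h]
      apply max_le h
      have : |(z + j).re| ≤ ‖z + j‖ := Complex.abs_re_le_norm _
      simpa using this
    · rw [if_neg h]
      push_neg at h
      rw [norm_one]
      apply max_le (by norm_num)
      have h2 : |(z + j).re| ≤ ‖z + j‖ := Complex.abs_re_le_norm _
      have : |z.re + (j:ℝ)| < 1/2 := by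
        have := h2.trans_lt h
        simpa using this
      linarith [this]
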